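/- Brahmagupta's arcsin formula follows from Bhāskara I's sine formula: if 0 ≤ s ≤ 90, r > 0, and m = r·s(180 - s) / ((1/4)(40500 - s(180 - s))), then s = 90 - √(8100 - 10125·m/(m/4 + r)). -/
import Mathlib


theorem stmt_5 (s r m : ℝ) (hs0 : 0 ≤ s) (hs90 : s ≤ 90) (hr : 0 < r)
    (hm : m = r * s * (180 - s) / ((1 / 4) * (40500 - s * (180 - s)))) :
    s = 90 - Real.sqrt (8100 - 10125 * m / (m / 4 + r)) := by
  have hD : (0:ℝ) < 40500 - s * (180 - s) := by nlinarith [sq_nonneg (90 - s)]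
  have hm4 : m / 4 + r = r * 40500 / (40500 - s * (180 - s)) := by
    rw [hm]; field_simp; ring
  have hm4pos : 0 < m / 4 + r := by
    rw [hm4]; positivity
  have key : 8100 - 10125 * m / (m / 4 + r) = (90 - s) ^ 2 := by
    rw [hm4, hm]
    field_simp
    ring
  rw [key, Real.sqrt_sq (by linarith)]
  ring
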